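/- Suppose 0 < δ < res'(I)/(6n) and let π be the projection π(a_{u,v}) = u. Then for all distinct indices i,j ∈ {1,…,k} and all vertices u ∈ U'_i and v ∈ U'_j, one has d_T(π(u),π(v)) − nδ < d_{T'}(u,v) < d_T(π(u),π(v)) − δ + 2nδ'. -/

import Mathlib

/-- `a` and `b` occur consecutively (in this order) in the list `l`. -/
def ConsecIn {V : Type*} (l : List V) (a b : V) : Prop :=
  ∃ m : ℕ, l[m]? = some a ∧ l[m + 1]? = some b

/-- Transformation of a tree instance with pairwise disjoint cells into one of maximum
degree 3: distances between two distinct transformed cells.  The new tree `T'` has a vertex `a_{u,v}` for every ordered pair of adjacent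
vertices of `T` (the subtype `{p : V × V // T.Adj p.1 p.2}`): `a_{u,v}` and `a_{v,u}` are
joined by an edge of length `λ(uv)` if `u,v` lie in a common cell `U i` and `λ(uv) − δ`
otherwise, and for each `u` the vertices `a_{u,v}` are connected into a path (given by an
enumeration `L u` of the neighbours of `u`) whose edges all have length `δ' = δ/(4n)`.
The cells become `U'ᵢ = {a_{u,v} : u ∈ Uᵢ}` and `π(a_{u,v}) = u` is the projection.
If `0 < δ < res'(I)/(6n)`, then for all distinct `i, j`, `a ∈ U'ᵢ` and `b ∈ U'ⱼ` we have
`d_T(π a, π b) − nδ < d_{T'}(a, b) < d_T(π a, π b) − δ + 2nδ'`. -/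
theorem degree_three_transform_dist_diff_cell
    {V : Type*} [Fintype V] [DecidableEq V] (T : SimpleGraph V) (hT : T.IsTree)
    (hn : 2 ≤ Fintype.card V)
    (w : Sym2 V → ℝ) (hw : ∀ e ∈ T.edgeSet, 0 < w e)
    (d : V → V → ℝ)
    (hd : ∀ (u v : V) (p : T.Walk u v), p.IsPath → (p.edges.map w).sum = d u v)
    (k : ℕ) (U : Fin k → Set V)
    (hcover : (⋃ i, U i) = Set.univ)
    (hdisj : ∀ i j, i ≠ j → Disjoint (U i) (U j))
    (hUconn : ∀ i, (T.induce (U i)).Connected)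
    -- the resolution `res'(I)`: the minimum positive difference of distances
    (resI : ℝ)
    (hres1 : ∀ v v' u : V, 0 < d v u - d v' u → resI ≤ d v u - d v' u)
    (hres2 : ∃ v v' u : V, 0 < d v u - d v' u ∧ resI = d v u - d v' u)
    (δ δ' : ℝ) (hδ : 0 < δ) (hδres : δ < resI / (6 * Fintype.card V))
    (hδ' : δ' = δ / (4 * Fintype.card V))
    -- an enumeration of the neighbours of each vertex
    (L : V → List V) (hLnd : ∀ u, (L u).Nodup) (hLmem : ∀ u v, v ∈ L u ↔ T.Adj u v)
    -- the transformed tree `T'`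
    (T' : SimpleGraph {p : V × V // T.Adj p.1 p.2})
    (hT'adj : ∀ a b : {p : V × V // T.Adj p.1 p.2}, T'.Adj a b ↔
      ((a.1.1 = b.1.2 ∧ a.1.2 = b.1.1) ∨
       (a.1.1 = b.1.1 ∧ (ConsecIn (L a.1.1) a.1.2 b.1.2 ∨ ConsecIn (L a.1.1) b.1.2 a.1.2))))
    -- its edge-lengths
    (w' : Sym2 {p : V × V // T.Adj p.1 p.2} → ℝ)
    (hwsame : ∀ a b : {p : V × V // T.Adj p.1 p.2}, a.1.1 = b.1.2 → a.1.2 = b.1.1 →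
      (∃ i, a.1.1 ∈ U i ∧ a.1.2 ∈ U i) → w' s(a, b) = w s(a.1.1, a.1.2))
    (hwdiff : ∀ a b : {p : V × V // T.Adj p.1 p.2}, a.1.1 = b.1.2 → a.1.2 = b.1.1 →
      (¬ ∃ i, a.1.1 ∈ U i ∧ a.1.2 ∈ U i) → w' s(a, b) = w s(a.1.1, a.1.2) - δ)
    (hwpath : ∀ a b : {p : V × V // T.Adj p.1 p.2}, a.1.1 = b.1.1 → a ≠ b →
      w' s(a, b) = δ')
    -- its tree distance
    (d' : {p : V × V // T.Adj p.1 p.2} → {p : V × V // T.Adj p.1 p.2} → ℝ)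
    (hd' : ∀ (a b : {p : V × V // T.Adj p.1 p.2}) (p : T'.Walk a b), p.IsPath →
      (p.edges.map w').sum = d' a b) :
    ∀ (i j : Fin k), i ≠ j →
      ∀ (a b : {p : V × V // T.Adj p.1 p.2}), a.1.1 ∈ U i → b.1.1 ∈ U j →
        d a.1.1 b.1.1 - Fintype.card V * δ < d' a b ∧
        d' a b < d a.1.1 b.1.1 - δ + 2 * Fintype.card V * δ' := by
  classical
  -- Step 1: walks within the star gadget of a vertex `x`, between consecutive indices
  have stepwalk : ∀ (x : V) (m i jj : ℕ) (hi : i < (L x).length) (hj : jj < (L x).length),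
      i ≤ jj → jj - i = m →
      ∀ (a b : {p : V × V // T.Adj p.1 p.2}),
        a.1 = (x, (L x).get ⟨i, hi⟩) → b.1 = (x, (L x).get ⟨jj, hj⟩) →
        ∃ q : T'.Walk a b, q.IsPath ∧ q.edges.length = jj - i ∧
          (∀ v ∈ q.support, ∃ t, ∃ ht : t < (L x).length,
            i ≤ t ∧ t ≤ jj ∧ v.1 = (x, (L x).get ⟨t, ht⟩)) ∧
          ∀ e ∈ q.edges, w' e = δ' := by
    intro x m
    induction m with
    | zero =>
      intro i jj hi hj hij hm a b hA hB
      have hij' : i = jj := by omega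
      subst hij'
      have hab : a = b := Subtype.ext (hA.trans hB.symm)
      subst hab
      refine ⟨SimpleGraph.Walk.nil, SimpleGraph.Walk.IsPath.nil, by simp, ?_, by simp⟩
      intro v hv
      simp only [SimpleGraph.Walk.support_nil, List.mem_singleton] at hv
      exact ⟨i, hi, le_refl _, le_refl _, by rw [hv]; exact hA⟩
    | succ m ih =>
      intro i jj hi hj hij hm a b hA hB
      have hi1 : i + 1 < (L x).length := by omega
      set a' : {p : V × V // T.Adj p.1 p.2} :=
        ⟨(x, (L x).get ⟨i+1, hi1⟩), (hLmem x _).1 (List.get_mem _ _)⟩ with ha'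
      have h1 : a.1.1 = x := by rw [hA]
      have h2 : a.1.2 = (L x).get ⟨i, hi⟩ := by rw [hA]
      have hadj : T'.Adj a a' := by
        rw [hT'adj]
        right
        refine ⟨by rw [h1], Or.inl ?_⟩
        rw [h1, h2]
        exact ⟨i, List.getElem?_eq_getElem hi, List.getElem?_eq_getElem hi1⟩
      obtain ⟨q', hq'path, hq'len, hq'supp, hq'edge⟩ :=
        ih (i+1) jj hi1 hj (by omega) (by omega) a' b rfl hB
      refine ⟨SimpleGraph.Walk.cons hadj q', ?_, ?_, ?_, ?_⟩
      · rw [SimpleGraph.Walk.cons_isPath_iff]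
        refine ⟨hq'path, fun hmem => ?_⟩
        obtain ⟨t, ht, ht1, ht2, hveq⟩ := hq'supp a hmem
        have hgt : (L x).get ⟨i, hi⟩ = (L x).get ⟨t, ht⟩ :=
          congrArg Prod.snd (hA.symm.trans hveq)
        have := congrArg Fin.val (((hLnd x).get_inj_iff).1 hgt)
        simp only at this
        omega
      · rw [SimpleGraph.Walk.edges_cons]
        simp only [List.length_cons, hq'len]
        omega
      · intro v hv
        rw [SimpleGraph.Walk.support_cons, List.mem_cons] at hv
        rcases hv with hv | hv
        · exact ⟨i, hi, le_refl _, by omega, by rw [hv]; exact hA⟩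
        · obtain ⟨t, ht, ht1, ht2, hveq⟩ := hq'supp v hv
          exact ⟨t, ht, by omega, ht2, hveq⟩
      · intro e he
        rw [SimpleGraph.Walk.edges_cons, List.mem_cons] at he
        rcases he with he | he
        · rw [he]
          apply hwpath a a'
          · rw [h1]
          · intro hab
            have h3 : ((x, (L x).get ⟨i, hi⟩) : V × V) = (x, (L x).get ⟨i+1, hi1⟩) := by
              rw [← hA, hab]
            have hgt : (L x).get ⟨i, hi⟩ = (L x).get ⟨i+1, hi1⟩ := congrArg Prod.snd h3
            have := congrArg Fin.val (((hLnd x).get_inj_iff).1 hgt)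
            simp only at this
            omega
        · exact hq'edge e he
  -- Step 2: walks within a star gadget between arbitrary vertices with first coordinate `x`
  have star : ∀ (x : V) (a b : {p : V × V // T.Adj p.1 p.2}), a.1.1 = x → b.1.1 = x →
      ∃ q : T'.Walk a b, q.IsPath ∧ (∀ v ∈ q.support, v.1.1 = x) ∧
        (∀ e ∈ q.edges, w' e = δ') ∧ q.edges.length + 1 ≤ (L x).length := by
    intro x a b hax hbx
    have ha2 : a.1.2 ∈ L x := (hLmem x _).2 (by rw [← hax]; exact a.2)
    have hb2 : b.1.2 ∈ L x := (hLmem x _).2 (by rw [← hbx]; exact b.2)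
    obtain ⟨⟨i, hi⟩, hgi⟩ := List.mem_iff_get.1 ha2
    obtain ⟨⟨jj, hj⟩, hgj⟩ := List.mem_iff_get.1 hb2
    have hA : a.1 = (x, (L x).get ⟨i, hi⟩) := by rw [hgi, ← hax]
    have hB : b.1 = (x, (L x).get ⟨jj, hj⟩) := by rw [hgj, ← hbx]
    rcases le_total i jj with hle | hle
    · obtain ⟨q, hqp, hqlen, hqsupp, hqe⟩ := stepwalk x (jj - i) i jj hi hj hle rfl a b hA hB
      refine ⟨q, hqp, ?_, hqe, by omega⟩
      intro v hv
      obtain ⟨t, ht, _, _, hveq⟩ := hqsupp v hv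
      rw [hveq]
    · obtain ⟨q, hqp, hqlen, hqsupp, hqe⟩ := stepwalk x (i - jj) jj i hj hi hle rfl b a hB hA
      refine ⟨q.reverse, (SimpleGraph.Walk.isPath_reverse_iff q).2 hqp, ?_, ?_, ?_⟩
      · intro v hv
        rw [SimpleGraph.Walk.support_reverse, List.mem_reverse] at hv
        obtain ⟨t, ht, _, _, hveq⟩ := hqsupp v hv
        rw [hveq]
      · intro e he
        rw [SimpleGraph.Walk.edges_reverse, List.mem_reverse] at he
        exact hqe e he
      · rw [SimpleGraph.Walk.edges_reverse, List.length_reverse]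
        omega
  -- Step 3: main construction along a path of `T`
  have main : ∀ (u v : V) (p : T.Walk u v), p.IsPath →
      ∀ (a b : {p : V × V // T.Adj p.1 p.2}), a.1.1 = u → b.1.1 = v →
      ∃ q : T'.Walk a b, q.IsPath ∧ (∀ y ∈ q.support, y.1.1 ∈ p.support) ∧
        ∃ c s : ℕ, c ≤ p.length ∧ ((¬ ∃ i0, u ∈ U i0 ∧ v ∈ U i0) → 1 ≤ c) ∧
          s ≤ (p.support.map (fun z => (L z).length - 1)).sum ∧
          (q.edges.map w').sum = (p.edges.map w).sum - (c : ℝ) * δ + (s : ℝ) * δ' := by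
    intro u v p
    induction p with
    | nil =>
      rename_i u0
      intro hp a b ha hb
      obtain ⟨q, hqp, hsupp, hedge, hlen⟩ := star _ a b ha hb
      refine ⟨q, hqp, ?_, 0, q.edges.length, le_refl _, ?_, ?_, ?_⟩
      · intro y hy
        rw [SimpleGraph.Walk.support_nil, List.mem_singleton]
        exact hsupp y hy
      · intro hno
        exfalso
        have hmem : u0 ∈ ⋃ i0, U i0 := by rw [hcover]; exact Set.mem_univ _
        obtain ⟨i0, hi0⟩ := Set.mem_iUnion.1 hmem
        exact hno ⟨i0, hi0, hi0⟩
      · rw [SimpleGraph.Walk.support_nil, List.map_singleton, List.sum_singleton]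
        omega
      · rw [SimpleGraph.Walk.edges_nil,
          List.sum_eq_card_nsmul (q.edges.map w') δ' (fun z hz => by
            obtain ⟨e, he, rfl⟩ := List.mem_map.1 hz; exact hedge e he),
          List.length_map]
        simp [nsmul_eq_mul]
    | @cons u1 x1 v1 h p' ih =>
      intro hp a b ha hb
      have hp' : p'.IsPath := hp.of_cons
      have hus : u1 ∉ p'.support := ((SimpleGraph.Walk.cons_isPath_iff h p').1 hp).2
      set m1 : {p : V × V // T.Adj p.1 p.2} := ⟨(u1, x1), h⟩ with hm1
      set m2 : {p : V × V // T.Adj p.1 p.2} := ⟨(x1, u1), h.symm⟩ with hm2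
      obtain ⟨q1, hq1p, hq1supp, hq1e, hq1len⟩ := star u1 a m1 ha rfl
      obtain ⟨q2, hq2p, hq2supp, c', s', hc', hcross', hs', hsum'⟩ := ih hp' m2 b rfl hb
      have hflip : T'.Adj m1 m2 := (hT'adj m1 m2).2 (Or.inl ⟨rfl, rfl⟩)
      set q : T'.Walk a b := q1.append (SimpleGraph.Walk.cons hflip q2) with hqdef
      have hqsupp : q.support = q1.support ++ q2.support := by
        rw [hqdef, SimpleGraph.Walk.support_append, SimpleGraph.Walk.support_cons,
          List.tail_cons]
      have hqedges : q.edges = q1.edges ++ (s(m1, m2) :: q2.edges) := by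
        rw [hqdef, SimpleGraph.Walk.edges_append, SimpleGraph.Walk.edges_cons]
      have hdisj12 : q1.support.Disjoint q2.support := by
        intro y hy1 hy2
        have hfc1 : y.1.1 = u1 := hq1supp y hy1
        have hfc2 : y.1.1 ∈ p'.support := hq2supp y hy2
        rw [hfc1] at hfc2
        exact hus hfc2
      have hqp : q.IsPath := by
        rw [SimpleGraph.Walk.isPath_def, hqsupp]
        exact ((SimpleGraph.Walk.isPath_def q1).1 hq1p).append
          ((SimpleGraph.Walk.isPath_def q2).1 hq2p) hdisj12
      have hS1 : (q1.edges.map w').sum = (q1.edges.length : ℝ) * δ' := by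
        rw [List.sum_eq_card_nsmul (q1.edges.map w') δ' (fun z hz => by
          obtain ⟨e, he, rfl⟩ := List.mem_map.1 hz; exact hq1e e he),
          List.length_map, nsmul_eq_mul]
      have hsuppmem : ∀ y ∈ q.support, y.1.1 ∈ (SimpleGraph.Walk.cons h p').support := by
        intro y hy
        rw [SimpleGraph.Walk.support_cons]
        rw [hqsupp, List.mem_append] at hy
        rcases hy with hy | hy
        · rw [hq1supp y hy]
          exact List.mem_cons_self
        · exact List.mem_cons_of_mem _ (hq2supp y hy)
      have hsbound : q1.edges.length + s' ≤
          (((SimpleGraph.Walk.cons h p').support).map (fun z => (L z).length - 1)).sum := by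
        rw [SimpleGraph.Walk.support_cons, List.map_cons, List.sum_cons]
        omega
      have hDsum : ((SimpleGraph.Walk.cons h p').edges.map w).sum
          = w s(u1, x1) + (p'.edges.map w).sum := by
        rw [SimpleGraph.Walk.edges_cons, List.map_cons, List.sum_cons]
      by_cases hC : ∃ i0, u1 ∈ U i0 ∧ x1 ∈ U i0
      · have hwf : w' s(m1, m2) = w s(u1, x1) := hwsame m1 m2 rfl rfl hC
        refine ⟨q, hqp, hsuppmem, c', q1.edges.length + s', ?_, ?_, hsbound, ?_⟩
        · rw [SimpleGraph.Walk.length_cons]; omega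
        · intro hno
          apply hcross'
          rintro ⟨i1, hx1, hv1⟩
          obtain ⟨i0, hu0, hx0⟩ := hC
          have hii : i0 = i1 := by
            by_contra hne
            exact Set.disjoint_left.1 (hdisj i0 i1 hne) hx0 hx1
          exact hno ⟨i0, hu0, hii ▸ hv1⟩
        · rw [hqedges, List.map_append, List.sum_append, List.map_cons, List.sum_cons,
            hS1, hwf, hsum', hDsum]
          push_cast
          ring
      · have hwf : w' s(m1, m2) = w s(u1, x1) - δ := hwdiff m1 m2 rfl rfl hC
        refine ⟨q, hqp, hsuppmem, c' + 1, q1.edges.length + s', ?_, fun _ => by omega,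
          hsbound, ?_⟩
        · rw [SimpleGraph.Walk.length_cons]; omega
        · rw [hqedges, List.map_append, List.sum_append, List.map_cons, List.sum_cons,
            hS1, hwf, hsum', hDsum]
          push_cast
          ring
  -- Step 4: degree-sum bound
  have hdegL : ∀ z : V, (L z).length = T.degree z := by
    intro z
    have htf : (L z).toFinset = T.neighborFinset z := by
      ext y
      simp [hLmem, SimpleGraph.mem_neighborFinset]
    rw [← List.toFinset_card_of_nodup (hLnd z), htf]
    rfl
  have hedgecount : T.edgeFinset.card + 1 = Fintype.card V := hT.card_edgeFinset
  have hsupbound : ∀ (u v : V) (p : T.Walk u v), p.IsPath →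
      (p.support.map (fun z => (L z).length - 1)).sum ≤ 2 * (Fintype.card V - 1) := by
    intro u v p hp
    have h1 : (p.support.map (fun z => (L z).length - 1)).sum
        ≤ (p.support.map (fun z => T.degree z)).sum := by
      apply List.sum_le_sum
      intro z hz
      rw [← hdegL z]
      omega
    have h2 : (p.support.map (fun z => T.degree z)).sum
        = ∑ z ∈ p.support.toFinset, T.degree z :=
      (List.sum_toFinset _ hp.support_nodup).symm
    have h3 : ∑ z ∈ p.support.toFinset, T.degree z ≤ ∑ z : V, T.degree z :=
      Finset.sum_le_sum_of_subset (Finset.subset_univ _)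
    have h4 : ∑ z : V, T.degree z = 2 * T.edgeFinset.card :=
      T.sum_degrees_eq_twice_card_edges
    omega
  -- Final assembly
  intro i j hij a b ha hb
  obtain ⟨p0⟩ := hT.isConnected.preconnected a.1.1 b.1.1
  have hp : p0.bypass.IsPath := p0.bypass_isPath
  obtain ⟨q, hqp, -, c, s, hc, hcross, hs, hsum⟩ := main a.1.1 b.1.1 p0.bypass hp a b rfl rfl
  have hD : (p0.bypass.edges.map w).sum = d a.1.1 b.1.1 := hd _ _ p0.bypass hp
  have hd'ab : (q.edges.map w').sum = d' a b := hd' a b q hqp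
  have hno : ¬ ∃ i0, a.1.1 ∈ U i0 ∧ b.1.1 ∈ U i0 := by
    rintro ⟨i0, h1, h2⟩
    have e1 : i = i0 := by
      by_contra hne
      exact Set.disjoint_left.1 (hdisj i i0 hne) ha h1
    have e2 : j = i0 := by
      by_contra hne
      exact Set.disjoint_left.1 (hdisj j i0 hne) hb h2
    exact hij (e1.trans e2.symm)
  have h1c : 1 ≤ c := hcross hno
  have hcn : c < Fintype.card V := lt_of_le_of_lt hc hp.length_lt
  have hsn : s ≤ 2 * (Fintype.card V - 1) := le_trans hs (hsupbound _ _ p0.bypass hp)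
  have hδ'pos : 0 < δ' := by
    rw [hδ']
    apply div_pos hδ
    have h2n : (2:ℝ) ≤ (Fintype.card V : ℝ) := by exact_mod_cast hn
    linarith
  have hcR : (c : ℝ) < (Fintype.card V : ℝ) := by exact_mod_cast hcn
  have hcR1 : (1:ℝ) ≤ (c:ℝ) := by exact_mod_cast h1c
  have hsR : (s : ℝ) < 2 * (Fintype.card V : ℝ) := by
    have h2n : (2:ℝ) ≤ (Fintype.card V : ℝ) := by exact_mod_cast hn
    have hcast : (s:ℝ) ≤ ((2 * (Fintype.card V - 1) : ℕ) : ℝ) := by exact_mod_cast hsn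
    have hcast2 : ((2 * (Fintype.card V - 1) : ℕ) : ℝ) = 2 * ((Fintype.card V : ℝ) - 1) := by
      have h1n : 1 ≤ Fintype.card V := by omega
      push_cast [Nat.cast_sub h1n]
      ring
    rw [hcast2] at hcast
    linarith
  rw [← hd'ab, hsum, ← hD]
  constructor
  · linarith [mul_lt_mul_of_pos_right hcR hδ,
      mul_nonneg (Nat.cast_nonneg s : (0:ℝ) ≤ (s:ℝ)) (le_of_lt hδ'pos)]
  · linarith [mul_lt_mul_of_pos_right hsR hδ'pos,
      mul_le_mul_of_nonneg_right hcR1 (le_of_lt hδ)]
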